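/- arXiv:1807.04810 — 2 statements merged into one kernel-verified Lean document; each statement's English description precedes it below -/
import Mathlib

section
/- For every integer n ≥ 3, the 1-eigenspace of Λ_n over F_2 satisfies 72 · dim_{F_2} E_1(Λ_n) ≥ 16n⁴ = |V(Λ_n)|. -/
abbrev RSet := ZMod 2 × ZMod 2 × ZMod 2 × ZMod 2

def rmul (p q : RSet) : RSet :=
  (p.1 + q.1, p.2.1 + q.2.1, p.2.2.1 + q.2.2.1,
   p.2.2.2 + q.2.2.2 + p.2.1 * q.1 + p.2.2.1 * q.2.1 + p.2.2.1 * q.1)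

def aR : RSet := (1, 0, 0, 0)
def bR : RSet := (0, 1, 0, 0)
def cR : RSet := (0, 0, 1, 0)
def idR : RSet := (0, 0, 0, 0)
def zR : RSet := (0, 0, 0, 1)
def bcR : RSet := (0, 1, 1, 0)
def bzR : RSet := (0, 1, 0, 1)
def czR : RSet := (0, 0, 1, 1)
def bczR : RSet := (0, 1, 1, 1)

lemma rmul_aa : ∀ g : RSet, rmul aR (rmul aR g) = g := by decide
lemma rmul_bb : ∀ g : RSet, rmul bR (rmul bR g) = g := by decide
lemma rmul_cc : ∀ g : RSet, rmul cR (rmul cR g) = g := by decide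

def MK : SimpleGraph RSet where
  Adj g h := g ≠ h ∧ (h = rmul aR g ∨ h = rmul bR g ∨ h = rmul cR g)
  symm := ⟨by
    rintro g h ⟨hne, h1 | h1 | h1⟩
    · exact ⟨hne.symm, Or.inl (by rw [h1, rmul_aa])⟩
    · exact ⟨hne.symm, Or.inr (Or.inl (by rw [h1, rmul_bb]))⟩
    · exact ⟨hne.symm, Or.inr (Or.inr (by rw [h1, rmul_cc]))⟩⟩
  loopless := ⟨fun g hg => hg.1 rfl⟩

/-- Integer quadruples, recording voltages before reduction mod `n`. -/
abbrev ZQuad := ℤ × ℤ × ℤ × ℤ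

/-- The voltage assignment `ζ` on the arcs of the Möbius–Kantor graph (with values
written in `ℤ⁴`; `e₁,…,e₄` are the standard basis vectors). -/
def zetaZ (u v : RSet) : ZQuad :=
  if u = idR ∧ v = cR then (1, 0, 0, 0)
  else if u = cR ∧ v = bcR then (0, 1, 0, 0)
  else if u = bcR ∧ v = bzR then (0, 0, 1, 0)
  else if u = bzR ∧ v = zR then (0, 0, 0, 1)
  else if u = zR ∧ v = czR then (-1, 0, 0, 0)
  else if u = czR ∧ v = bczR then (0, -1, 0, 0)
  else if u = bczR ∧ v = bR then (0, 0, -1, 0)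
  else if u = bR ∧ v = idR then (0, 0, 0, -1)
  else if u = cR ∧ v = idR then (-1, 0, 0, 0)
  else if u = bcR ∧ v = cR then (0, -1, 0, 0)
  else if u = bzR ∧ v = bcR then (0, 0, -1, 0)
  else if u = zR ∧ v = bzR then (0, 0, 0, -1)
  else if u = czR ∧ v = zR then (1, 0, 0, 0)
  else if u = bczR ∧ v = czR then (0, 1, 0, 0)
  else if u = bR ∧ v = bczR then (0, 0, 1, 0)
  else if u = idR ∧ v = bR then (0, 0, 0, 1)
  else 0

lemma zetaZ_anti : ∀ u v : RSet, zetaZ v u = -zetaZ u v := by decide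

/-- Quadruples over `ℤ/nℤ`. -/
abbrev NQuad (n : ℕ) := ZMod n × ZMod n × ZMod n × ZMod n

/-- Reduction of an integer quadruple modulo `n`. -/
def castQuad (n : ℕ) (p : ZQuad) : NQuad n :=
  ((p.1 : ZMod n), (p.2.1 : ZMod n), (p.2.2.1 : ZMod n), (p.2.2.2 : ZMod n))

lemma castQuad_neg (n : ℕ) (p : ZQuad) : castQuad n (-p) = -castQuad n p := by
  simp [castQuad, Prod.ext_iff]

/-- The covering graph `Λ_n` of the Möbius–Kantor graph derived from the voltage
assignment `ζ` with values in `(ℤ/nℤ)⁴`. -/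
def Lam (n : ℕ) : SimpleGraph (RSet × NQuad n) where
  Adj p q := MK.Adj p.1 q.1 ∧ q.2 = p.2 + castQuad n (zetaZ p.1 q.1)
  symm := ⟨by
    rintro ⟨u, x⟩ ⟨v, y⟩ ⟨hadj, hy⟩
    refine ⟨hadj.symm, ?_⟩
    rw [zetaZ_anti u v, castQuad_neg, hy]
    abel⟩
  loopless := ⟨fun p hp => MK.irrefl hp.1⟩

open scoped Classical in
/-- The 1-eigenspace of the adjacency matrix of `Λ` over `F₂`. -/
noncomputable def eigOne {V : Type*} [Fintype V] (Λ : SimpleGraph V) :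
    Submodule (ZMod 2) (V → ZMod 2) :=
  LinearMap.ker (Matrix.toLin' (Λ.adjMatrix (ZMod 2)) - LinearMap.id)


/-! ### Auxiliary material -/

set_option synthInstance.maxSize 4000
set_option maxHeartbeats 1000000

def Sm : RSet → List ZQuad := fun u =>
  if u = ((0:ZMod 2), (0:ZMod 2), (0:ZMod 2), (0:ZMod 2)) then [((-1:ℤ), -1, -1, -1), ((-1:ℤ), -1, 0, -1), ((-1:ℤ), 0, -1, -1), ((-1:ℤ), 0, 0, -1)]
  else  if u = ((0:ZMod 2), (0:ZMod 2), (0:ZMod 2), (1:ZMod 2)) then [((0:ℤ), 0, 0, 0), ((0:ℤ), 0, 1, 0), ((0:ℤ), 1, 0, 0), ((0:ℤ), 1, 1, 0)]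
  else  if u = ((0:ZMod 2), (0:ZMod 2), (1:ZMod 2), (0:ZMod 2)) then [((0:ℤ), 0, -1, -1), ((0:ℤ), 0, 0, -1), ((0:ℤ), 0, 0, 0), ((0:ℤ), 0, 1, 0)]
  else  if u = ((0:ZMod 2), (0:ZMod 2), (1:ZMod 2), (1:ZMod 2)) then [((-1:ℤ), 0, -1, -1), ((-1:ℤ), 0, 0, -1), ((-1:ℤ), 0, 0, 0), ((-1:ℤ), 0, 1, 0)]
  else  if u = ((0:ZMod 2), (1:ZMod 2), (0:ZMod 2), (0:ZMod 2)) then [((-1:ℤ), -1, 0, 0), ((-1:ℤ), 0, 0, 0), ((0:ℤ), 0, 0, 0), ((0:ℤ), 1, 0, 0)]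
  else  if u = ((0:ZMod 2), (1:ZMod 2), (0:ZMod 2), (1:ZMod 2)) then [((-1:ℤ), -1, 0, -1), ((-1:ℤ), 0, 0, -1), ((0:ℤ), 0, 0, -1), ((0:ℤ), 1, 0, -1)]
  else  if u = ((0:ZMod 2), (1:ZMod 2), (1:ZMod 2), (0:ZMod 2)) then [((-1:ℤ), 0, -1, -1), ((-1:ℤ), 0, 0, 0), ((0:ℤ), 0, -1, -1), ((0:ℤ), 0, 0, -1), ((0:ℤ), 1, 0, -1), ((0:ℤ), 1, 0, 0)]
  else  if u = ((0:ZMod 2), (1:ZMod 2), (1:ZMod 2), (1:ZMod 2)) then [((-1:ℤ), -1, 0, -1), ((-1:ℤ), -1, 0, 0), ((-1:ℤ), 0, 0, 0), ((-1:ℤ), 0, 1, 0), ((0:ℤ), 0, 0, -1), ((0:ℤ), 0, 1, 0)]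
  else  if u = ((1:ZMod 2), (0:ZMod 2), (0:ZMod 2), (0:ZMod 2)) then [((-1:ℤ), -1, -1, -1), ((-1:ℤ), 0, 0, -1), ((-1:ℤ), 0, 0, 0), ((-1:ℤ), 0, 1, 0), ((0:ℤ), 0, 0, -1), ((0:ℤ), 1, 0, -1)]
  else  if u = ((1:ZMod 2), (0:ZMod 2), (0:ZMod 2), (1:ZMod 2)) then [((-1:ℤ), -1, 0, 0), ((-1:ℤ), 0, 0, 0), ((0:ℤ), 0, -1, -1), ((0:ℤ), 0, 0, -1), ((0:ℤ), 0, 0, 0), ((0:ℤ), 1, 1, 0)]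
  else  if u = ((1:ZMod 2), (0:ZMod 2), (1:ZMod 2), (0:ZMod 2)) then [((-1:ℤ), -1, -1, -1), ((-1:ℤ), -1, 0, 0), ((0:ℤ), 0, 0, -1), ((0:ℤ), 0, 1, 0)]
  else  if u = ((1:ZMod 2), (0:ZMod 2), (1:ZMod 2), (1:ZMod 2)) then [((-1:ℤ), 0, -1, -1), ((-1:ℤ), 0, 0, 0), ((0:ℤ), 1, 0, -1), ((0:ℤ), 1, 1, 0)]
  else  if u = ((1:ZMod 2), (1:ZMod 2), (0:ZMod 2), (0:ZMod 2)) then [((-1:ℤ), -1, -1, -1), ((-1:ℤ), 0, 0, 0), ((0:ℤ), 0, -1, -1), ((0:ℤ), 1, 0, 0)]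
  else  if u = ((1:ZMod 2), (1:ZMod 2), (0:ZMod 2), (1:ZMod 2)) then [((-1:ℤ), -1, 0, -1), ((-1:ℤ), 0, 1, 0), ((0:ℤ), 0, 0, -1), ((0:ℤ), 1, 1, 0)]
  else  if u = ((1:ZMod 2), (1:ZMod 2), (1:ZMod 2), (0:ZMod 2)) then [((-1:ℤ), -1, -1, -1), ((-1:ℤ), 0, 0, 0), ((0:ℤ), 0, 0, -1), ((0:ℤ), 1, 1, 0)]
  else  [((-1:ℤ), -1, -1, -1), ((-1:ℤ), 0, 0, 0), ((0:ℤ), 0, 0, -1), ((0:ℤ), 1, 1, 0)]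

lemma castQuad_sub (n : ℕ) (p q : ZQuad) :
    castQuad n (p - q) = castQuad n p - castQuad n q := by
  simp [castQuad, Prod.ext_iff]

def Yfun (n : ℕ) (l : NQuad n → ZMod 2) (u : RSet) (v : NQuad n) : ZMod 2 :=
  ((Sm u).map (fun c => l (v - castQuad n c))).sum

lemma pair_sum (f : ZQuad → ZMod 2) (A C : List ZQuad) (h : A.Perm (C ++ C)) :
    (A.map f).sum = 0 := by
  rw [(h.map f).sum_eq, List.map_append, List.sum_append]
  exact (by decide : ∀ x : ZMod 2, x + x = 0) _

lemma shift_sum (n : ℕ) (l : NQuad n → ZMod 2) (v : NQuad n) (s : ZQuad) (M : List ZQuad) :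
    (M.map (fun c => l (v + castQuad n s - castQuad n c))).sum
      = ((M.map (· - s)).map (fun c => l (v - castQuad n c))).sum := by
  rw [List.map_map]
  have he : (fun c => l (v + castQuad n s - castQuad n c))
      = ((fun c => l (v - castQuad n c)) ∘ fun x => x - s) := by
    funext c
    show l (v + castQuad n s - castQuad n c) = l (v - castQuad n (c - s))
    rw [castQuad_sub]
    congr 1
    abel
  rw [he]

lemma eig_id (n : ℕ) (l : NQuad n → ZMod 2) (u : RSet) (v : NQuad n) :
    Yfun n l (rmul aR u) (v + castQuad n (zetaZ u (rmul aR u)))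
      + Yfun n l (rmul bR u) (v + castQuad n (zetaZ u (rmul bR u)))
      + Yfun n l (rmul cR u) (v + castQuad n (zetaZ u (rmul cR u)))
      = Yfun n l u v := by
  have h2 : ∀ x y : ZMod 2, x + y = 0 → x = y := by decide
  have h16 : ∀ w : RSet, w = ((0:ZMod 2), (0:ZMod 2), (0:ZMod 2), (0:ZMod 2)) ∨ w = ((0:ZMod 2), (0:ZMod 2), (0:ZMod 2), (1:ZMod 2)) ∨ w = ((0:ZMod 2), (0:ZMod 2), (1:ZMod 2), (0:ZMod 2)) ∨ w = ((0:ZMod 2), (0:ZMod 2), (1:ZMod 2), (1:ZMod 2)) ∨ w = ((0:ZMod 2), (1:ZMod 2), (0:ZMod 2), (0:ZMod 2)) ∨ w = ((0:ZMod 2), (1:ZMod 2), (0:ZMod 2), (1:ZMod 2)) ∨ w = ((0:ZMod 2), (1:ZMod 2), (1:ZMod 2), (0:ZMod 2)) ∨ w = ((0:ZMod 2), (1:ZMod 2), (1:ZMod 2), (1:ZMod 2)) ∨ w = ((1:ZMod 2), (0:ZMod 2), (0:ZMod 2), (0:ZMod 2)) ∨ w = ((1:ZMod 2), (0:ZMod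 2), (0:ZMod 2), (1:ZMod 2)) ∨ w = ((1:ZMod 2), (0:ZMod 2), (1:ZMod 2), (0:ZMod 2)) ∨ w = ((1:ZMod 2), (0:ZMod 2), (1:ZMod 2), (1:ZMod 2)) ∨ w = ((1:ZMod 2), (1:ZMod 2), (0:ZMod 2), (0:ZMod 2)) ∨ w = ((1:ZMod 2), (1:ZMod 2), (0:ZMod 2), (1:ZMod 2)) ∨ w = ((1:ZMod 2), (1:ZMod 2), (1:ZMod 2), (0:ZMod 2)) ∨ w = ((1:ZMod 2), (1:ZMod 2), (1:ZMod 2), (1:ZMod 2)) := by decide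
  rcases h16 u with rfl|rfl|rfl|rfl|rfl|rfl|rfl|rfl|rfl|rfl|rfl|rfl|rfl|rfl|rfl|rfl
  · rw [show rmul aR ((0:ZMod 2), (0:ZMod 2), (0:ZMod 2), (0:ZMod 2)) = ((1:ZMod 2), (0:ZMod 2), (0:ZMod 2), (0:ZMod 2)) from by decide,
        show rmul bR ((0:ZMod 2), (0:ZMod 2), (0:ZMod 2), (0:ZMod 2)) = ((0:ZMod 2), (1:ZMod 2), (0:ZMod 2), (0:ZMod 2)) from by decide,
        show rmul cR ((0:ZMod 2), (0:ZMod 2), (0:ZMod 2), (0:ZMod 2)) = ((0:ZMod 2), (0:ZMod 2), (1:ZMod 2), (0:ZMod 2)) from by decide,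
        show zetaZ ((0:ZMod 2), (0:ZMod 2), (0:ZMod 2), (0:ZMod 2)) ((1:ZMod 2), (0:ZMod 2), (0:ZMod 2), (0:ZMod 2)) = ((0:ℤ), 0, 0, 0) from by decide,
        show zetaZ ((0:ZMod 2), (0:ZMod 2), (0:ZMod 2), (0:ZMod 2)) ((0:ZMod 2), (1:ZMod 2), (0:ZMod 2), (0:ZMod 2)) = ((0:ℤ), 0, 0, 1) from by decide,
        show zetaZ ((0:ZMod 2), (0:ZMod 2), (0:ZMod 2), (0:ZMod 2)) ((0:ZMod 2), (0:ZMod 2), (1:ZMod 2), (0:ZMod 2)) = ((1:ℤ), 0, 0, 0) from by decide]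
    simp only [Yfun]
    rw [shift_sum, shift_sum, shift_sum]
    have key := pair_sum (fun c => l (v - castQuad n c))
        ((Sm ((1:ZMod 2), (0:ZMod 2), (0:ZMod 2), (0:ZMod 2))).map (· - ((0:ℤ), 0, 0, 0)) ++ (Sm ((0:ZMod 2), (1:ZMod 2), (0:ZMod 2), (0:ZMod 2))).map (· - ((0:ℤ), 0, 0, 1)) ++
         (Sm ((0:ZMod 2), (0:ZMod 2), (1:ZMod 2), (0:ZMod 2))).map (· - ((1:ℤ), 0, 0, 0)) ++ Sm ((0:ZMod 2), (0:ZMod 2), (0:ZMod 2), (0:ZMod 2)))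
        ([((-1:ℤ), -1, -1, -1), ((-1:ℤ), -1, 0, -1), ((-1:ℤ), 0, -1, -1), ((-1:ℤ), 0, 0, -1), ((-1:ℤ), 0, 0, -1), ((-1:ℤ), 0, 0, 0), ((-1:ℤ), 0, 1, 0), ((0:ℤ), 0, 0, -1), ((0:ℤ), 1, 0, -1)] : List ZQuad) (by decide)
    simp only [List.map_append, List.sum_append] at key
    exact h2 _ _ key
  · rw [show rmul aR ((0:ZMod 2), (0:ZMod 2), (0:ZMod 2), (1:ZMod 2)) = ((1:ZMod 2), (0:ZMod 2), (0:ZMod 2), (1:ZMod 2)) from by decide,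
        show rmul bR ((0:ZMod 2), (0:ZMod 2), (0:ZMod 2), (1:ZMod 2)) = ((0:ZMod 2), (1:ZMod 2), (0:ZMod 2), (1:ZMod 2)) from by decide,
        show rmul cR ((0:ZMod 2), (0:ZMod 2), (0:ZMod 2), (1:ZMod 2)) = ((0:ZMod 2), (0:ZMod 2), (1:ZMod 2), (1:ZMod 2)) from by decide,
        show zetaZ ((0:ZMod 2), (0:ZMod 2), (0:ZMod 2), (1:ZMod 2)) ((1:ZMod 2), (0:ZMod 2), (0:ZMod 2), (1:ZMod 2)) = ((0:ℤ), 0, 0, 0) from by decide,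
        show zetaZ ((0:ZMod 2), (0:ZMod 2), (0:ZMod 2), (1:ZMod 2)) ((0:ZMod 2), (1:ZMod 2), (0:ZMod 2), (1:ZMod 2)) = ((0:ℤ), 0, 0, -1) from by decide,
        show zetaZ ((0:ZMod 2), (0:ZMod 2), (0:ZMod 2), (1:ZMod 2)) ((0:ZMod 2), (0:ZMod 2), (1:ZMod 2), (1:ZMod 2)) = ((-1:ℤ), 0, 0, 0) from by decide]
    simp only [Yfun]
    rw [shift_sum, shift_sum, shift_sum]
    have key := pair_sum (fun c => l (v - castQuad n c))
        ((Sm ((1:ZMod 2), (0:ZMod 2), (0:ZMod 2), (1:ZMod 2))).map (· - ((0:ℤ), 0, 0, 0)) ++ (Sm ((0:ZMod 2), (1:ZMod 2), (0:ZMod 2), (1:ZMod 2))).map (· - ((0:ℤ), 0, 0, -1)) ++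
         (Sm ((0:ZMod 2), (0:ZMod 2), (1:ZMod 2), (1:ZMod 2))).map (· - ((-1:ℤ), 0, 0, 0)) ++ Sm ((0:ZMod 2), (0:ZMod 2), (0:ZMod 2), (1:ZMod 2)))
        ([((-1:ℤ), -1, 0, 0), ((-1:ℤ), 0, 0, 0), ((0:ℤ), 0, -1, -1), ((0:ℤ), 0, 0, -1), ((0:ℤ), 0, 0, 0), ((0:ℤ), 0, 0, 0), ((0:ℤ), 0, 1, 0), ((0:ℤ), 1, 0, 0), ((0:ℤ), 1, 1, 0)] : List ZQuad) (by decide)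
    simp only [List.map_append, List.sum_append] at key
    exact h2 _ _ key
  · rw [show rmul aR ((0:ZMod 2), (0:ZMod 2), (1:ZMod 2), (0:ZMod 2)) = ((1:ZMod 2), (0:ZMod 2), (1:ZMod 2), (0:ZMod 2)) from by decide,
        show rmul bR ((0:ZMod 2), (0:ZMod 2), (1:ZMod 2), (0:ZMod 2)) = ((0:ZMod 2), (1:ZMod 2), (1:ZMod 2), (0:ZMod 2)) from by decide,
        show rmul cR ((0:ZMod 2), (0:ZMod 2), (1:ZMod 2), (0:ZMod 2)) = ((0:ZMod 2), (0:ZMod 2), (0:ZMod 2), (0:ZMod 2)) from by decide,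
        show zetaZ ((0:ZMod 2), (0:ZMod 2), (1:ZMod 2), (0:ZMod 2)) ((1:ZMod 2), (0:ZMod 2), (1:ZMod 2), (0:ZMod 2)) = ((0:ℤ), 0, 0, 0) from by decide,
        show zetaZ ((0:ZMod 2), (0:ZMod 2), (1:ZMod 2), (0:ZMod 2)) ((0:ZMod 2), (1:ZMod 2), (1:ZMod 2), (0:ZMod 2)) = ((0:ℤ), 1, 0, 0) from by decide,
        show zetaZ ((0:ZMod 2), (0:ZMod 2), (1:ZMod 2), (0:ZMod 2)) ((0:ZMod 2), (0:ZMod 2), (0:ZMod 2), (0:ZMod 2)) = ((-1:ℤ), 0, 0, 0) from by decide]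
    simp only [Yfun]
    rw [shift_sum, shift_sum, shift_sum]
    have key := pair_sum (fun c => l (v - castQuad n c))
        ((Sm ((1:ZMod 2), (0:ZMod 2), (1:ZMod 2), (0:ZMod 2))).map (· - ((0:ℤ), 0, 0, 0)) ++ (Sm ((0:ZMod 2), (1:ZMod 2), (1:ZMod 2), (0:ZMod 2))).map (· - ((0:ℤ), 1, 0, 0)) ++
         (Sm ((0:ZMod 2), (0:ZMod 2), (0:ZMod 2), (0:ZMod 2))).map (· - ((-1:ℤ), 0, 0, 0)) ++ Sm ((0:ZMod 2), (0:ZMod 2), (1:ZMod 2), (0:ZMod 2)))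
        ([((-1:ℤ), -1, -1, -1), ((-1:ℤ), -1, 0, 0), ((0:ℤ), -1, -1, -1), ((0:ℤ), -1, 0, -1), ((0:ℤ), 0, -1, -1), ((0:ℤ), 0, 0, -1), ((0:ℤ), 0, 0, -1), ((0:ℤ), 0, 0, 0), ((0:ℤ), 0, 1, 0)] : List ZQuad) (by decide)
    simp only [List.map_append, List.sum_append] at key
    exact h2 _ _ key
  · rw [show rmul aR ((0:ZMod 2), (0:ZMod 2), (1:ZMod 2), (1:ZMod 2)) = ((1:ZMod 2), (0:ZMod 2), (1:ZMod 2), (1:ZMod 2)) from by decide,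
        show rmul bR ((0:ZMod 2), (0:ZMod 2), (1:ZMod 2), (1:ZMod 2)) = ((0:ZMod 2), (1:ZMod 2), (1:ZMod 2), (1:ZMod 2)) from by decide,
        show rmul cR ((0:ZMod 2), (0:ZMod 2), (1:ZMod 2), (1:ZMod 2)) = ((0:ZMod 2), (0:ZMod 2), (0:ZMod 2), (1:ZMod 2)) from by decide,
        show zetaZ ((0:ZMod 2), (0:ZMod 2), (1:ZMod 2), (1:ZMod 2)) ((1:ZMod 2), (0:ZMod 2), (1:ZMod 2), (1:ZMod 2)) = ((0:ℤ), 0, 0, 0) from by decide,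
        show zetaZ ((0:ZMod 2), (0:ZMod 2), (1:ZMod 2), (1:ZMod 2)) ((0:ZMod 2), (1:ZMod 2), (1:ZMod 2), (1:ZMod 2)) = ((0:ℤ), -1, 0, 0) from by decide,
        show zetaZ ((0:ZMod 2), (0:ZMod 2), (1:ZMod 2), (1:ZMod 2)) ((0:ZMod 2), (0:ZMod 2), (0:ZMod 2), (1:ZMod 2)) = ((1:ℤ), 0, 0, 0) from by decide]
    simp only [Yfun]
    rw [shift_sum, shift_sum, shift_sum]
    have key := pair_sum (fun c => l (v - castQuad n c))
        ((Sm ((1:ZMod 2), (0:ZMod 2), (1:ZMod 2), (1:ZMod 2))).map (· - ((0:ℤ), 0, 0, 0)) ++ (Sm ((0:ZMod 2), (1:ZMod 2), (1:ZMod 2), (1:ZMod 2))).map (· - ((0:ℤ), -1, 0, 0)) ++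
         (Sm ((0:ZMod 2), (0:ZMod 2), (0:ZMod 2), (1:ZMod 2))).map (· - ((1:ℤ), 0, 0, 0)) ++ Sm ((0:ZMod 2), (0:ZMod 2), (1:ZMod 2), (1:ZMod 2)))
        ([((-1:ℤ), 0, -1, -1), ((-1:ℤ), 0, 0, -1), ((-1:ℤ), 0, 0, 0), ((-1:ℤ), 0, 0, 0), ((-1:ℤ), 0, 1, 0), ((-1:ℤ), 1, 0, 0), ((-1:ℤ), 1, 1, 0), ((0:ℤ), 1, 0, -1), ((0:ℤ), 1, 1, 0)] : List ZQuad) (by decide)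
    simp only [List.map_append, List.sum_append] at key
    exact h2 _ _ key
  · rw [show rmul aR ((0:ZMod 2), (1:ZMod 2), (0:ZMod 2), (0:ZMod 2)) = ((1:ZMod 2), (1:ZMod 2), (0:ZMod 2), (0:ZMod 2)) from by decide,
        show rmul bR ((0:ZMod 2), (1:ZMod 2), (0:ZMod 2), (0:ZMod 2)) = ((0:ZMod 2), (0:ZMod 2), (0:ZMod 2), (0:ZMod 2)) from by decide,
        show rmul cR ((0:ZMod 2), (1:ZMod 2), (0:ZMod 2), (0:ZMod 2)) = ((0:ZMod 2), (1:ZMod 2), (1:ZMod 2), (1:ZMod 2)) from by decide,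
        show zetaZ ((0:ZMod 2), (1:ZMod 2), (0:ZMod 2), (0:ZMod 2)) ((1:ZMod 2), (1:ZMod 2), (0:ZMod 2), (0:ZMod 2)) = ((0:ℤ), 0, 0, 0) from by decide,
        show zetaZ ((0:ZMod 2), (1:ZMod 2), (0:ZMod 2), (0:ZMod 2)) ((0:ZMod 2), (0:ZMod 2), (0:ZMod 2), (0:ZMod 2)) = ((0:ℤ), 0, 0, -1) from by decide,
        show zetaZ ((0:ZMod 2), (1:ZMod 2), (0:ZMod 2), (0:ZMod 2)) ((0:ZMod 2), (1:ZMod 2), (1:ZMod 2), (1:ZMod 2)) = ((0:ℤ), 0, 1, 0) from by decide]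
    simp only [Yfun]
    rw [shift_sum, shift_sum, shift_sum]
    have key := pair_sum (fun c => l (v - castQuad n c))
        ((Sm ((1:ZMod 2), (1:ZMod 2), (0:ZMod 2), (0:ZMod 2))).map (· - ((0:ℤ), 0, 0, 0)) ++ (Sm ((0:ZMod 2), (0:ZMod 2), (0:ZMod 2), (0:ZMod 2))).map (· - ((0:ℤ), 0, 0, -1)) ++
         (Sm ((0:ZMod 2), (1:ZMod 2), (1:ZMod 2), (1:ZMod 2))).map (· - ((0:ℤ), 0, 1, 0)) ++ Sm ((0:ZMod 2), (1:ZMod 2), (0:ZMod 2), (0:ZMod 2)))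
        ([((-1:ℤ), -1, -1, -1), ((-1:ℤ), -1, -1, 0), ((-1:ℤ), -1, 0, 0), ((-1:ℤ), 0, -1, 0), ((-1:ℤ), 0, 0, 0), ((-1:ℤ), 0, 0, 0), ((0:ℤ), 0, -1, -1), ((0:ℤ), 0, 0, 0), ((0:ℤ), 1, 0, 0)] : List ZQuad) (by decide)
    simp only [List.map_append, List.sum_append] at key
    exact h2 _ _ key
  · rw [show rmul aR ((0:ZMod 2), (1:ZMod 2), (0:ZMod 2), (1:ZMod 2)) = ((1:ZMod 2), (1:ZMod 2), (0:ZMod 2), (1:ZMod 2)) from by decide,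
        show rmul bR ((0:ZMod 2), (1:ZMod 2), (0:ZMod 2), (1:ZMod 2)) = ((0:ZMod 2), (0:ZMod 2), (0:ZMod 2), (1:ZMod 2)) from by decide,
        show rmul cR ((0:ZMod 2), (1:ZMod 2), (0:ZMod 2), (1:ZMod 2)) = ((0:ZMod 2), (1:ZMod 2), (1:ZMod 2), (0:ZMod 2)) from by decide,
        show zetaZ ((0:ZMod 2), (1:ZMod 2), (0:ZMod 2), (1:ZMod 2)) ((1:ZMod 2), (1:ZMod 2), (0:ZMod 2), (1:ZMod 2)) = ((0:ℤ), 0, 0, 0) from by decide,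
        show zetaZ ((0:ZMod 2), (1:ZMod 2), (0:ZMod 2), (1:ZMod 2)) ((0:ZMod 2), (0:ZMod 2), (0:ZMod 2), (1:ZMod 2)) = ((0:ℤ), 0, 0, 1) from by decide,
        show zetaZ ((0:ZMod 2), (1:ZMod 2), (0:ZMod 2), (1:ZMod 2)) ((0:ZMod 2), (1:ZMod 2), (1:ZMod 2), (0:ZMod 2)) = ((0:ℤ), 0, -1, 0) from by decide]
    simp only [Yfun]
    rw [shift_sum, shift_sum, shift_sum]
    have key := pair_sum (fun c => l (v - castQuad n c))
        ((Sm ((1:ZMod 2), (1:ZMod 2), (0:ZMod 2), (1:ZMod 2))).map (· - ((0:ℤ), 0, 0, 0)) ++ (Sm ((0:ZMod 2), (0:ZMod 2), (0:ZMod 2), (1:ZMod 2))).map (· - ((0:ℤ), 0, 0, 1)) ++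
         (Sm ((0:ZMod 2), (1:ZMod 2), (1:ZMod 2), (0:ZMod 2))).map (· - ((0:ℤ), 0, -1, 0)) ++ Sm ((0:ZMod 2), (1:ZMod 2), (0:ZMod 2), (1:ZMod 2)))
        ([((-1:ℤ), -1, 0, -1), ((-1:ℤ), 0, 0, -1), ((-1:ℤ), 0, 1, 0), ((0:ℤ), 0, 0, -1), ((0:ℤ), 0, 0, -1), ((0:ℤ), 0, 1, -1), ((0:ℤ), 1, 0, -1), ((0:ℤ), 1, 1, -1), ((0:ℤ), 1, 1, 0)] : List ZQuad) (by decide)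
    simp only [List.map_append, List.sum_append] at key
    exact h2 _ _ key
  · rw [show rmul aR ((0:ZMod 2), (1:ZMod 2), (1:ZMod 2), (0:ZMod 2)) = ((1:ZMod 2), (1:ZMod 2), (1:ZMod 2), (0:ZMod 2)) from by decide,
        show rmul bR ((0:ZMod 2), (1:ZMod 2), (1:ZMod 2), (0:ZMod 2)) = ((0:ZMod 2), (0:ZMod 2), (1:ZMod 2), (0:ZMod 2)) from by decide,
        show rmul cR ((0:ZMod 2), (1:ZMod 2), (1:ZMod 2), (0:ZMod 2)) = ((0:ZMod 2), (1:ZMod 2), (0:ZMod 2), (1:ZMod 2)) from by decide,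
        show zetaZ ((0:ZMod 2), (1:ZMod 2), (1:ZMod 2), (0:ZMod 2)) ((1:ZMod 2), (1:ZMod 2), (1:ZMod 2), (0:ZMod 2)) = ((0:ℤ), 0, 0, 0) from by decide,
        show zetaZ ((0:ZMod 2), (1:ZMod 2), (1:ZMod 2), (0:ZMod 2)) ((0:ZMod 2), (0:ZMod 2), (1:ZMod 2), (0:ZMod 2)) = ((0:ℤ), -1, 0, 0) from by decide,
        show zetaZ ((0:ZMod 2), (1:ZMod 2), (1:ZMod 2), (0:ZMod 2)) ((0:ZMod 2), (1:ZMod 2), (0:ZMod 2), (1:ZMod 2)) = ((0:ℤ), 0, 1, 0) from by decide]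
    simp only [Yfun]
    rw [shift_sum, shift_sum, shift_sum]
    have key := pair_sum (fun c => l (v - castQuad n c))
        ((Sm ((1:ZMod 2), (1:ZMod 2), (1:ZMod 2), (0:ZMod 2))).map (· - ((0:ℤ), 0, 0, 0)) ++ (Sm ((0:ZMod 2), (0:ZMod 2), (1:ZMod 2), (0:ZMod 2))).map (· - ((0:ℤ), -1, 0, 0)) ++
         (Sm ((0:ZMod 2), (1:ZMod 2), (0:ZMod 2), (1:ZMod 2))).map (· - ((0:ℤ), 0, 1, 0)) ++ Sm ((0:ZMod 2), (1:ZMod 2), (1:ZMod 2), (0:ZMod 2)))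
        ([((-1:ℤ), -1, -1, -1), ((-1:ℤ), 0, -1, -1), ((-1:ℤ), 0, 0, 0), ((0:ℤ), 0, -1, -1), ((0:ℤ), 0, 0, -1), ((0:ℤ), 1, -1, -1), ((0:ℤ), 1, 0, -1), ((0:ℤ), 1, 0, 0), ((0:ℤ), 1, 1, 0)] : List ZQuad) (by decide)
    simp only [List.map_append, List.sum_append] at key
    exact h2 _ _ key
  · rw [show rmul aR ((0:ZMod 2), (1:ZMod 2), (1:ZMod 2), (1:ZMod 2)) = ((1:ZMod 2), (1:ZMod 2), (1:ZMod 2), (1:ZMod 2)) from by decide,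
        show rmul bR ((0:ZMod 2), (1:ZMod 2), (1:ZMod 2), (1:ZMod 2)) = ((0:ZMod 2), (0:ZMod 2), (1:ZMod 2), (1:ZMod 2)) from by decide,
        show rmul cR ((0:ZMod 2), (1:ZMod 2), (1:ZMod 2), (1:ZMod 2)) = ((0:ZMod 2), (1:ZMod 2), (0:ZMod 2), (0:ZMod 2)) from by decide,
        show zetaZ ((0:ZMod 2), (1:ZMod 2), (1:ZMod 2), (1:ZMod 2)) ((1:ZMod 2), (1:ZMod 2), (1:ZMod 2), (1:ZMod 2)) = ((0:ℤ), 0, 0, 0) from by decide,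
        show zetaZ ((0:ZMod 2), (1:ZMod 2), (1:ZMod 2), (1:ZMod 2)) ((0:ZMod 2), (0:ZMod 2), (1:ZMod 2), (1:ZMod 2)) = ((0:ℤ), 1, 0, 0) from by decide,
        show zetaZ ((0:ZMod 2), (1:ZMod 2), (1:ZMod 2), (1:ZMod 2)) ((0:ZMod 2), (1:ZMod 2), (0:ZMod 2), (0:ZMod 2)) = ((0:ℤ), 0, -1, 0) from by decide]
    simp only [Yfun]
    rw [shift_sum, shift_sum, shift_sum]
    have key := pair_sum (fun c => l (v - castQuad n c))
        ((Sm ((1:ZMod 2), (1:ZMod 2), (1:ZMod 2), (1:ZMod 2))).map (· - ((0:ℤ), 0, 0, 0)) ++ (Sm ((0:ZMod 2), (0:ZMod 2), (1:ZMod 2), (1:ZMod 2))).map (· - ((0:ℤ), 1, 0, 0)) ++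
         (Sm ((0:ZMod 2), (1:ZMod 2), (0:ZMod 2), (0:ZMod 2))).map (· - ((0:ℤ), 0, -1, 0)) ++ Sm ((0:ZMod 2), (1:ZMod 2), (1:ZMod 2), (1:ZMod 2)))
        ([((-1:ℤ), -1, -1, -1), ((-1:ℤ), -1, 0, -1), ((-1:ℤ), -1, 0, 0), ((-1:ℤ), -1, 1, 0), ((-1:ℤ), 0, 0, 0), ((-1:ℤ), 0, 1, 0), ((0:ℤ), 0, 0, -1), ((0:ℤ), 0, 1, 0), ((0:ℤ), 1, 1, 0)] : List ZQuad) (by decide)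
    simp only [List.map_append, List.sum_append] at key
    exact h2 _ _ key
  · rw [show rmul aR ((1:ZMod 2), (0:ZMod 2), (0:ZMod 2), (0:ZMod 2)) = ((0:ZMod 2), (0:ZMod 2), (0:ZMod 2), (0:ZMod 2)) from by decide,
        show rmul bR ((1:ZMod 2), (0:ZMod 2), (0:ZMod 2), (0:ZMod 2)) = ((1:ZMod 2), (1:ZMod 2), (0:ZMod 2), (1:ZMod 2)) from by decide,
        show rmul cR ((1:ZMod 2), (0:ZMod 2), (0:ZMod 2), (0:ZMod 2)) = ((1:ZMod 2), (0:ZMod 2), (1:ZMod 2), (1:ZMod 2)) from by decide,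
        show zetaZ ((1:ZMod 2), (0:ZMod 2), (0:ZMod 2), (0:ZMod 2)) ((0:ZMod 2), (0:ZMod 2), (0:ZMod 2), (0:ZMod 2)) = ((0:ℤ), 0, 0, 0) from by decide,
        show zetaZ ((1:ZMod 2), (0:ZMod 2), (0:ZMod 2), (0:ZMod 2)) ((1:ZMod 2), (1:ZMod 2), (0:ZMod 2), (1:ZMod 2)) = ((0:ℤ), 0, 0, 0) from by decide,
        show zetaZ ((1:ZMod 2), (0:ZMod 2), (0:ZMod 2), (0:ZMod 2)) ((1:ZMod 2), (0:ZMod 2), (1:ZMod 2), (1:ZMod 2)) = ((0:ℤ), 0, 0, 0) from by decide]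
    simp only [Yfun]
    rw [shift_sum, shift_sum, shift_sum]
    have key := pair_sum (fun c => l (v - castQuad n c))
        ((Sm ((0:ZMod 2), (0:ZMod 2), (0:ZMod 2), (0:ZMod 2))).map (· - ((0:ℤ), 0, 0, 0)) ++ (Sm ((1:ZMod 2), (1:ZMod 2), (0:ZMod 2), (1:ZMod 2))).map (· - ((0:ℤ), 0, 0, 0)) ++
         (Sm ((1:ZMod 2), (0:ZMod 2), (1:ZMod 2), (1:ZMod 2))).map (· - ((0:ℤ), 0, 0, 0)) ++ Sm ((1:ZMod 2), (0:ZMod 2), (0:ZMod 2), (0:ZMod 2)))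
        ([((-1:ℤ), -1, -1, -1), ((-1:ℤ), -1, 0, -1), ((-1:ℤ), 0, -1, -1), ((-1:ℤ), 0, 0, -1), ((-1:ℤ), 0, 0, 0), ((-1:ℤ), 0, 1, 0), ((0:ℤ), 0, 0, -1), ((0:ℤ), 1, 0, -1), ((0:ℤ), 1, 1, 0)] : List ZQuad) (by decide)
    simp only [List.map_append, List.sum_append] at key
    exact h2 _ _ key
  · rw [show rmul aR ((1:ZMod 2), (0:ZMod 2), (0:ZMod 2), (1:ZMod 2)) = ((0:ZMod 2), (0:ZMod 2), (0:ZMod 2), (1:ZMod 2)) from by decide,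
        show rmul bR ((1:ZMod 2), (0:ZMod 2), (0:ZMod 2), (1:ZMod 2)) = ((1:ZMod 2), (1:ZMod 2), (0:ZMod 2), (0:ZMod 2)) from by decide,
        show rmul cR ((1:ZMod 2), (0:ZMod 2), (0:ZMod 2), (1:ZMod 2)) = ((1:ZMod 2), (0:ZMod 2), (1:ZMod 2), (0:ZMod 2)) from by decide,
        show zetaZ ((1:ZMod 2), (0:ZMod 2), (0:ZMod 2), (1:ZMod 2)) ((0:ZMod 2), (0:ZMod 2), (0:ZMod 2), (1:ZMod 2)) = ((0:ℤ), 0, 0, 0) from by decide,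
        show zetaZ ((1:ZMod 2), (0:ZMod 2), (0:ZMod 2), (1:ZMod 2)) ((1:ZMod 2), (1:ZMod 2), (0:ZMod 2), (0:ZMod 2)) = ((0:ℤ), 0, 0, 0) from by decide,
        show zetaZ ((1:ZMod 2), (0:ZMod 2), (0:ZMod 2), (1:ZMod 2)) ((1:ZMod 2), (0:ZMod 2), (1:ZMod 2), (0:ZMod 2)) = ((0:ℤ), 0, 0, 0) from by decide]
    simp only [Yfun]
    rw [shift_sum, shift_sum, shift_sum]
    have key := pair_sum (fun c => l (v - castQuad n c))
        ((Sm ((0:ZMod 2), (0:ZMod 2), (0:ZMod 2), (1:ZMod 2))).map (· - ((0:ℤ), 0, 0, 0)) ++ (Sm ((1:ZMod 2), (1:ZMod 2), (0:ZMod 2), (0:ZMod 2))).map (· - ((0:ℤ), 0, 0, 0)) ++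
         (Sm ((1:ZMod 2), (0:ZMod 2), (1:ZMod 2), (0:ZMod 2))).map (· - ((0:ℤ), 0, 0, 0)) ++ Sm ((1:ZMod 2), (0:ZMod 2), (0:ZMod 2), (1:ZMod 2)))
        ([((-1:ℤ), -1, -1, -1), ((-1:ℤ), -1, 0, 0), ((-1:ℤ), 0, 0, 0), ((0:ℤ), 0, -1, -1), ((0:ℤ), 0, 0, -1), ((0:ℤ), 0, 0, 0), ((0:ℤ), 0, 1, 0), ((0:ℤ), 1, 0, 0), ((0:ℤ), 1, 1, 0)] : List ZQuad) (by decide)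
    simp only [List.map_append, List.sum_append] at key
    exact h2 _ _ key
  · rw [show rmul aR ((1:ZMod 2), (0:ZMod 2), (1:ZMod 2), (0:ZMod 2)) = ((0:ZMod 2), (0:ZMod 2), (1:ZMod 2), (0:ZMod 2)) from by decide,
        show rmul bR ((1:ZMod 2), (0:ZMod 2), (1:ZMod 2), (0:ZMod 2)) = ((1:ZMod 2), (1:ZMod 2), (1:ZMod 2), (1:ZMod 2)) from by decide,
        show rmul cR ((1:ZMod 2), (0:ZMod 2), (1:ZMod 2), (0:ZMod 2)) = ((1:ZMod 2), (0:ZMod 2), (0:ZMod 2), (1:ZMod 2)) from by decide,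
        show zetaZ ((1:ZMod 2), (0:ZMod 2), (1:ZMod 2), (0:ZMod 2)) ((0:ZMod 2), (0:ZMod 2), (1:ZMod 2), (0:ZMod 2)) = ((0:ℤ), 0, 0, 0) from by decide,
        show zetaZ ((1:ZMod 2), (0:ZMod 2), (1:ZMod 2), (0:ZMod 2)) ((1:ZMod 2), (1:ZMod 2), (1:ZMod 2), (1:ZMod 2)) = ((0:ℤ), 0, 0, 0) from by decide,
        show zetaZ ((1:ZMod 2), (0:ZMod 2), (1:ZMod 2), (0:ZMod 2)) ((1:ZMod 2), (0:ZMod 2), (0:ZMod 2), (1:ZMod 2)) = ((0:ℤ), 0, 0, 0) from by decide]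
    simp only [Yfun]
    rw [shift_sum, shift_sum, shift_sum]
    have key := pair_sum (fun c => l (v - castQuad n c))
        ((Sm ((0:ZMod 2), (0:ZMod 2), (1:ZMod 2), (0:ZMod 2))).map (· - ((0:ℤ), 0, 0, 0)) ++ (Sm ((1:ZMod 2), (1:ZMod 2), (1:ZMod 2), (1:ZMod 2))).map (· - ((0:ℤ), 0, 0, 0)) ++
         (Sm ((1:ZMod 2), (0:ZMod 2), (0:ZMod 2), (1:ZMod 2))).map (· - ((0:ℤ), 0, 0, 0)) ++ Sm ((1:ZMod 2), (0:ZMod 2), (1:ZMod 2), (0:ZMod 2)))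
        ([((-1:ℤ), -1, -1, -1), ((-1:ℤ), -1, 0, 0), ((-1:ℤ), 0, 0, 0), ((0:ℤ), 0, -1, -1), ((0:ℤ), 0, 0, -1), ((0:ℤ), 0, 0, -1), ((0:ℤ), 0, 0, 0), ((0:ℤ), 0, 1, 0), ((0:ℤ), 1, 1, 0)] : List ZQuad) (by decide)
    simp only [List.map_append, List.sum_append] at key
    exact h2 _ _ key
  · rw [show rmul aR ((1:ZMod 2), (0:ZMod 2), (1:ZMod 2), (1:ZMod 2)) = ((0:ZMod 2), (0:ZMod 2), (1:ZMod 2), (1:ZMod 2)) from by decide,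
        show rmul bR ((1:ZMod 2), (0:ZMod 2), (1:ZMod 2), (1:ZMod 2)) = ((1:ZMod 2), (1:ZMod 2), (1:ZMod 2), (0:ZMod 2)) from by decide,
        show rmul cR ((1:ZMod 2), (0:ZMod 2), (1:ZMod 2), (1:ZMod 2)) = ((1:ZMod 2), (0:ZMod 2), (0:ZMod 2), (0:ZMod 2)) from by decide,
        show zetaZ ((1:ZMod 2), (0:ZMod 2), (1:ZMod 2), (1:ZMod 2)) ((0:ZMod 2), (0:ZMod 2), (1:ZMod 2), (1:ZMod 2)) = ((0:ℤ), 0, 0, 0) from by decide,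
        show zetaZ ((1:ZMod 2), (0:ZMod 2), (1:ZMod 2), (1:ZMod 2)) ((1:ZMod 2), (1:ZMod 2), (1:ZMod 2), (0:ZMod 2)) = ((0:ℤ), 0, 0, 0) from by decide,
        show zetaZ ((1:ZMod 2), (0:ZMod 2), (1:ZMod 2), (1:ZMod 2)) ((1:ZMod 2), (0:ZMod 2), (0:ZMod 2), (0:ZMod 2)) = ((0:ℤ), 0, 0, 0) from by decide]
    simp only [Yfun]
    rw [shift_sum, shift_sum, shift_sum]
    have key := pair_sum (fun c => l (v - castQuad n c))
        ((Sm ((0:ZMod 2), (0:ZMod 2), (1:ZMod 2), (1:ZMod 2))).map (· - ((0:ℤ), 0, 0, 0)) ++ (Sm ((1:ZMod 2), (1:ZMod 2), (1:ZMod 2), (0:ZMod 2))).map (· - ((0:ℤ), 0, 0, 0)) ++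
         (Sm ((1:ZMod 2), (0:ZMod 2), (0:ZMod 2), (0:ZMod 2))).map (· - ((0:ℤ), 0, 0, 0)) ++ Sm ((1:ZMod 2), (0:ZMod 2), (1:ZMod 2), (1:ZMod 2)))
        ([((-1:ℤ), -1, -1, -1), ((-1:ℤ), 0, -1, -1), ((-1:ℤ), 0, 0, -1), ((-1:ℤ), 0, 0, 0), ((-1:ℤ), 0, 0, 0), ((-1:ℤ), 0, 1, 0), ((0:ℤ), 0, 0, -1), ((0:ℤ), 1, 0, -1), ((0:ℤ), 1, 1, 0)] : List ZQuad) (by decide)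
    simp only [List.map_append, List.sum_append] at key
    exact h2 _ _ key
  · rw [show rmul aR ((1:ZMod 2), (1:ZMod 2), (0:ZMod 2), (0:ZMod 2)) = ((0:ZMod 2), (1:ZMod 2), (0:ZMod 2), (0:ZMod 2)) from by decide,
        show rmul bR ((1:ZMod 2), (1:ZMod 2), (0:ZMod 2), (0:ZMod 2)) = ((1:ZMod 2), (0:ZMod 2), (0:ZMod 2), (1:ZMod 2)) from by decide,
        show rmul cR ((1:ZMod 2), (1:ZMod 2), (0:ZMod 2), (0:ZMod 2)) = ((1:ZMod 2), (1:ZMod 2), (1:ZMod 2), (0:ZMod 2)) from by decide,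
        show zetaZ ((1:ZMod 2), (1:ZMod 2), (0:ZMod 2), (0:ZMod 2)) ((0:ZMod 2), (1:ZMod 2), (0:ZMod 2), (0:ZMod 2)) = ((0:ℤ), 0, 0, 0) from by decide,
        show zetaZ ((1:ZMod 2), (1:ZMod 2), (0:ZMod 2), (0:ZMod 2)) ((1:ZMod 2), (0:ZMod 2), (0:ZMod 2), (1:ZMod 2)) = ((0:ℤ), 0, 0, 0) from by decide,
        show zetaZ ((1:ZMod 2), (1:ZMod 2), (0:ZMod 2), (0:ZMod 2)) ((1:ZMod 2), (1:ZMod 2), (1:ZMod 2), (0:ZMod 2)) = ((0:ℤ), 0, 0, 0) from by decide]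
    simp only [Yfun]
    rw [shift_sum, shift_sum, shift_sum]
    have key := pair_sum (fun c => l (v - castQuad n c))
        ((Sm ((0:ZMod 2), (1:ZMod 2), (0:ZMod 2), (0:ZMod 2))).map (· - ((0:ℤ), 0, 0, 0)) ++ (Sm ((1:ZMod 2), (0:ZMod 2), (0:ZMod 2), (1:ZMod 2))).map (· - ((0:ℤ), 0, 0, 0)) ++
         (Sm ((1:ZMod 2), (1:ZMod 2), (1:ZMod 2), (0:ZMod 2))).map (· - ((0:ℤ), 0, 0, 0)) ++ Sm ((1:ZMod 2), (1:ZMod 2), (0:ZMod 2), (0:ZMod 2)))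
        ([((-1:ℤ), -1, -1, -1), ((-1:ℤ), -1, 0, 0), ((-1:ℤ), 0, 0, 0), ((-1:ℤ), 0, 0, 0), ((0:ℤ), 0, -1, -1), ((0:ℤ), 0, 0, -1), ((0:ℤ), 0, 0, 0), ((0:ℤ), 1, 0, 0), ((0:ℤ), 1, 1, 0)] : List ZQuad) (by decide)
    simp only [List.map_append, List.sum_append] at key
    exact h2 _ _ key
  · rw [show rmul aR ((1:ZMod 2), (1:ZMod 2), (0:ZMod 2), (1:ZMod 2)) = ((0:ZMod 2), (1:ZMod 2), (0:ZMod 2), (1:ZMod 2)) from by decide,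
        show rmul bR ((1:ZMod 2), (1:ZMod 2), (0:ZMod 2), (1:ZMod 2)) = ((1:ZMod 2), (0:ZMod 2), (0:ZMod 2), (0:ZMod 2)) from by decide,
        show rmul cR ((1:ZMod 2), (1:ZMod 2), (0:ZMod 2), (1:ZMod 2)) = ((1:ZMod 2), (1:ZMod 2), (1:ZMod 2), (1:ZMod 2)) from by decide,
        show zetaZ ((1:ZMod 2), (1:ZMod 2), (0:ZMod 2), (1:ZMod 2)) ((0:ZMod 2), (1:ZMod 2), (0:ZMod 2), (1:ZMod 2)) = ((0:ℤ), 0, 0, 0) from by decide,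
        show zetaZ ((1:ZMod 2), (1:ZMod 2), (0:ZMod 2), (1:ZMod 2)) ((1:ZMod 2), (0:ZMod 2), (0:ZMod 2), (0:ZMod 2)) = ((0:ℤ), 0, 0, 0) from by decide,
        show zetaZ ((1:ZMod 2), (1:ZMod 2), (0:ZMod 2), (1:ZMod 2)) ((1:ZMod 2), (1:ZMod 2), (1:ZMod 2), (1:ZMod 2)) = ((0:ℤ), 0, 0, 0) from by decide]
    simp only [Yfun]
    rw [shift_sum, shift_sum, shift_sum]
    have key := pair_sum (fun c => l (v - castQuad n c))
        ((Sm ((0:ZMod 2), (1:ZMod 2), (0:ZMod 2), (1:ZMod 2))).map (· - ((0:ℤ), 0, 0, 0)) ++ (Sm ((1:ZMod 2), (0:ZMod 2), (0:ZMod 2), (0:ZMod 2))).map (· - ((0:ℤ), 0, 0, 0)) ++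
         (Sm ((1:ZMod 2), (1:ZMod 2), (1:ZMod 2), (1:ZMod 2))).map (· - ((0:ℤ), 0, 0, 0)) ++ Sm ((1:ZMod 2), (1:ZMod 2), (0:ZMod 2), (1:ZMod 2)))
        ([((-1:ℤ), -1, -1, -1), ((-1:ℤ), -1, 0, -1), ((-1:ℤ), 0, 0, -1), ((-1:ℤ), 0, 0, 0), ((-1:ℤ), 0, 1, 0), ((0:ℤ), 0, 0, -1), ((0:ℤ), 0, 0, -1), ((0:ℤ), 1, 0, -1), ((0:ℤ), 1, 1, 0)] : List ZQuad) (by decide)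
    simp only [List.map_append, List.sum_append] at key
    exact h2 _ _ key
  · rw [show rmul aR ((1:ZMod 2), (1:ZMod 2), (1:ZMod 2), (0:ZMod 2)) = ((0:ZMod 2), (1:ZMod 2), (1:ZMod 2), (0:ZMod 2)) from by decide,
        show rmul bR ((1:ZMod 2), (1:ZMod 2), (1:ZMod 2), (0:ZMod 2)) = ((1:ZMod 2), (0:ZMod 2), (1:ZMod 2), (1:ZMod 2)) from by decide,
        show rmul cR ((1:ZMod 2), (1:ZMod 2), (1:ZMod 2), (0:ZMod 2)) = ((1:ZMod 2), (1:ZMod 2), (0:ZMod 2), (0:ZMod 2)) from by decide,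
        show zetaZ ((1:ZMod 2), (1:ZMod 2), (1:ZMod 2), (0:ZMod 2)) ((0:ZMod 2), (1:ZMod 2), (1:ZMod 2), (0:ZMod 2)) = ((0:ℤ), 0, 0, 0) from by decide,
        show zetaZ ((1:ZMod 2), (1:ZMod 2), (1:ZMod 2), (0:ZMod 2)) ((1:ZMod 2), (0:ZMod 2), (1:ZMod 2), (1:ZMod 2)) = ((0:ℤ), 0, 0, 0) from by decide,
        show zetaZ ((1:ZMod 2), (1:ZMod 2), (1:ZMod 2), (0:ZMod 2)) ((1:ZMod 2), (1:ZMod 2), (0:ZMod 2), (0:ZMod 2)) = ((0:ℤ), 0, 0, 0) from by decide]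
    simp only [Yfun]
    rw [shift_sum, shift_sum, shift_sum]
    have key := pair_sum (fun c => l (v - castQuad n c))
        ((Sm ((0:ZMod 2), (1:ZMod 2), (1:ZMod 2), (0:ZMod 2))).map (· - ((0:ℤ), 0, 0, 0)) ++ (Sm ((1:ZMod 2), (0:ZMod 2), (1:ZMod 2), (1:ZMod 2))).map (· - ((0:ℤ), 0, 0, 0)) ++
         (Sm ((1:ZMod 2), (1:ZMod 2), (0:ZMod 2), (0:ZMod 2))).map (· - ((0:ℤ), 0, 0, 0)) ++ Sm ((1:ZMod 2), (1:ZMod 2), (1:ZMod 2), (0:ZMod 2)))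
        ([((-1:ℤ), -1, -1, -1), ((-1:ℤ), 0, -1, -1), ((-1:ℤ), 0, 0, 0), ((-1:ℤ), 0, 0, 0), ((0:ℤ), 0, -1, -1), ((0:ℤ), 0, 0, -1), ((0:ℤ), 1, 0, -1), ((0:ℤ), 1, 0, 0), ((0:ℤ), 1, 1, 0)] : List ZQuad) (by decide)
    simp only [List.map_append, List.sum_append] at key
    exact h2 _ _ key
  · rw [show rmul aR ((1:ZMod 2), (1:ZMod 2), (1:ZMod 2), (1:ZMod 2)) = ((0:ZMod 2), (1:ZMod 2), (1:ZMod 2), (1:ZMod 2)) from by decide,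
        show rmul bR ((1:ZMod 2), (1:ZMod 2), (1:ZMod 2), (1:ZMod 2)) = ((1:ZMod 2), (0:ZMod 2), (1:ZMod 2), (0:ZMod 2)) from by decide,
        show rmul cR ((1:ZMod 2), (1:ZMod 2), (1:ZMod 2), (1:ZMod 2)) = ((1:ZMod 2), (1:ZMod 2), (0:ZMod 2), (1:ZMod 2)) from by decide,
        show zetaZ ((1:ZMod 2), (1:ZMod 2), (1:ZMod 2), (1:ZMod 2)) ((0:ZMod 2), (1:ZMod 2), (1:ZMod 2), (1:ZMod 2)) = ((0:ℤ), 0, 0, 0) from by decide,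
        show zetaZ ((1:ZMod 2), (1:ZMod 2), (1:ZMod 2), (1:ZMod 2)) ((1:ZMod 2), (0:ZMod 2), (1:ZMod 2), (0:ZMod 2)) = ((0:ℤ), 0, 0, 0) from by decide,
        show zetaZ ((1:ZMod 2), (1:ZMod 2), (1:ZMod 2), (1:ZMod 2)) ((1:ZMod 2), (1:ZMod 2), (0:ZMod 2), (1:ZMod 2)) = ((0:ℤ), 0, 0, 0) from by decide]
    simp only [Yfun]
    rw [shift_sum, shift_sum, shift_sum]
    have key := pair_sum (fun c => l (v - castQuad n c))
        ((Sm ((0:ZMod 2), (1:ZMod 2), (1:ZMod 2), (1:ZMod 2))).map (· - ((0:ℤ), 0, 0, 0)) ++ (Sm ((1:ZMod 2), (0:ZMod 2), (1:ZMod 2), (0:ZMod 2))).map (· - ((0:ℤ), 0, 0, 0)) ++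
         (Sm ((1:ZMod 2), (1:ZMod 2), (0:ZMod 2), (1:ZMod 2))).map (· - ((0:ℤ), 0, 0, 0)) ++ Sm ((1:ZMod 2), (1:ZMod 2), (1:ZMod 2), (1:ZMod 2)))
        ([((-1:ℤ), -1, -1, -1), ((-1:ℤ), -1, 0, -1), ((-1:ℤ), -1, 0, 0), ((-1:ℤ), 0, 0, 0), ((-1:ℤ), 0, 1, 0), ((0:ℤ), 0, 0, -1), ((0:ℤ), 0, 0, -1), ((0:ℤ), 0, 1, 0), ((0:ℤ), 1, 1, 0)] : List ZQuad) (by decide)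
    simp only [List.map_append, List.sum_append] at key
    exact h2 _ _ key

lemma mk_adj_iff (u h : RSet) :
    MK.Adj u h ↔ (h = rmul aR u ∨ h = rmul bR u ∨ h = rmul cR u) := by
  constructor
  · rintro ⟨_, hh⟩; exact hh
  · intro hh
    have hd : ∀ g : RSet, g ≠ rmul aR g ∧ g ≠ rmul bR g ∧ g ≠ rmul cR g := by decide
    rcases hh with rfl | rfl | rfl
    · exact ⟨(hd u).1, Or.inl rfl⟩
    · exact ⟨(hd u).2.1, Or.inr (Or.inl rfl)⟩
    · exact ⟨(hd u).2.2, Or.inr (Or.inr rfl)⟩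

lemma lam_adj_iff (n : ℕ) (u : RSet) (v : NQuad n) (q : RSet × NQuad n) :
    (Lam n).Adj (u, v) q ↔
      (q = (rmul aR u, v + castQuad n (zetaZ u (rmul aR u))) ∨
       q = (rmul bR u, v + castQuad n (zetaZ u (rmul bR u))) ∨
       q = (rmul cR u, v + castQuad n (zetaZ u (rmul cR u)))) := by
  constructor
  · rintro ⟨hMK, h2⟩
    rcases (mk_adj_iff u q.1).1 hMK with h1 | h1 | h1
    · exact Or.inl (Prod.ext h1 (by rw [h2, h1]))
    · exact Or.inr (Or.inl (Prod.ext h1 (by rw [h2, h1])))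
    · exact Or.inr (Or.inr (Prod.ext h1 (by rw [h2, h1])))
  · intro hh
    rcases hh with rfl | rfl | rfl
    · exact ⟨(mk_adj_iff u _).2 (Or.inl rfl), rfl⟩
    · exact ⟨(mk_adj_iff u _).2 (Or.inr (Or.inl rfl)), rfl⟩
    · exact ⟨(mk_adj_iff u _).2 (Or.inr (Or.inr rfl)), rfl⟩

lemma adj_sum (n : ℕ) [NeZero n] (x : RSet × NQuad n → ZMod 2) (u : RSet) (v : NQuad n)
    [inst : ∀ q : RSet × NQuad n, Decidable ((Lam n).Adj (u, v) q)] :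
    (∑ q : RSet × NQuad n, if (Lam n).Adj (u, v) q then x q else 0)
      = x (rmul aR u, v + castQuad n (zetaZ u (rmul aR u)))
        + x (rmul bR u, v + castQuad n (zetaZ u (rmul bR u)))
        + x (rmul cR u, v + castQuad n (zetaZ u (rmul cR u))) := by
  have hd2 : ∀ g : RSet,
      rmul aR g ≠ rmul bR g ∧ rmul aR g ≠ rmul cR g ∧ rmul bR g ≠ rmul cR g := by
    decide
  have h3 : ∀ q : RSet × NQuad n, (Lam n).Adj (u, v) q ↔
      q ∈ ({(rmul aR u, v + castQuad n (zetaZ u (rmul aR u))),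
            (rmul bR u, v + castQuad n (zetaZ u (rmul bR u))),
            (rmul cR u, v + castQuad n (zetaZ u (rmul cR u)))} : Finset (RSet × NQuad n)) := by
    intro q
    rw [lam_adj_iff]
    simp [Finset.mem_insert, Finset.mem_singleton]
  rw [Finset.sum_congr rfl (fun q _ => if_congr (h3 q) rfl rfl)]
  rw [Finset.sum_ite_mem, Finset.univ_inter]
  rw [Finset.sum_insert (by simp [Prod.ext_iff, (hd2 u).1, (hd2 u).2.1]),
      Finset.sum_insert (by simp [Prod.ext_iff, (hd2 u).2.2]),
      Finset.sum_singleton, ← add_assoc]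

lemma Y_mem (n : ℕ) [NeZero n] (l : NQuad n → ZMod 2) :
    (fun p : RSet × NQuad n => Yfun n l p.1 p.2) ∈ eigOne (Lam n) := by
  classical
  show _ ∈ LinearMap.ker
      (Matrix.toLin' ((Lam n).adjMatrix (ZMod 2)) - (LinearMap.id : ((RSet × NQuad n) → ZMod 2) →ₗ[ZMod 2] _))
  rw [LinearMap.mem_ker, LinearMap.sub_apply, LinearMap.id_apply, sub_eq_zero,
    Matrix.toLin'_apply]
  funext p
  obtain ⟨u, v⟩ := p
  simp only [Matrix.mulVec, dotProduct, SimpleGraph.adjMatrix_apply, ite_mul, one_mul,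
    zero_mul]
  rw [adj_sum]
  exact eig_id n l u v

abbrev Pidx (n : ℕ) := ZMod n × Fin (n - 1) × Fin (n - 1) × ZMod n

def emb (n : ℕ) (p : Pidx n) : NQuad n :=
  (p.1, (p.2.1.val : ZMod n), (p.2.2.1.val : ZMod n), p.2.2.2)

lemma natCast_zmod_inj (n : ℕ) [NeZero n] {a b : ℕ} (ha : a < n) (hb : b < n)
    (h : (a : ZMod n) = b) : a = b := by
  have := congrArg ZMod.val h
  rwa [ZMod.val_cast_of_lt ha, ZMod.val_cast_of_lt hb] at this

lemma fin_lt (n : ℕ) (k : Fin (n - 1)) : k.val < n :=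
  lt_of_lt_of_le k.isLt (Nat.sub_le n 1)

def mutv (n : ℕ) [NeZero n] (μ : Pidx n → ZMod 2) : NQuad n → ZMod 2 :=
  fun t => ∑ p : Pidx n, if t = emb n p then μ p else 0

lemma mutv_add (n : ℕ) [NeZero n] (μ ν : Pidx n → ZMod 2) (t : NQuad n) :
    mutv n (μ + ν) t = mutv n μ t + mutv n ν t := by
  unfold mutv
  rw [← Finset.sum_add_distrib]
  exact Finset.sum_congr rfl fun p _ => by by_cases h : t = emb n p <;> simp [h]

lemma mutv_smul (n : ℕ) [NeZero n] (c : ZMod 2) (μ : Pidx n → ZMod 2) (t : NQuad n) :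
    mutv n (c • μ) t = c * mutv n μ t := by
  unfold mutv
  rw [Finset.mul_sum]
  exact Finset.sum_congr rfl fun p _ => by by_cases h : t = emb n p <;> simp [h]

lemma list_sum_map_add {α : Type*} (l : List α) (f g : α → ZMod 2) :
    (l.map (fun i => f i + g i)).sum = (l.map f).sum + (l.map g).sum := by
  induction l with
  | nil => simp
  | cons a t ih => simp [ih]; ring

lemma list_sum_map_mul {α : Type*} (l : List α) (c : ZMod 2) (f : α → ZMod 2) :
    (l.map (fun i => c * f i)).sum = c * (l.map f).sum := by
  induction l with
  | nil => simp
  | cons a t ih => simp [ih]; ring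

noncomputable def Gmap (n : ℕ) [NeZero n] :
    (Pidx n → ZMod 2) →ₗ[ZMod 2] eigOne (Lam n) where
  toFun μ := ⟨fun p => Yfun n (mutv n μ) p.1 p.2, Y_mem n _⟩
  map_add' μ ν := by
    apply Subtype.ext
    funext p
    show Yfun n (mutv n (μ + ν)) p.1 p.2
      = Yfun n (mutv n μ) p.1 p.2 + Yfun n (mutv n ν) p.1 p.2
    unfold Yfun
    rw [show (fun c => mutv n (μ + ν) (p.2 - castQuad n c))
        = (fun c => mutv n μ (p.2 - castQuad n c) + mutv n ν (p.2 - castQuad n c)) from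
      funext fun c => mutv_add n μ ν _]
    exact list_sum_map_add _ _ _
  map_smul' c μ := by
    apply Subtype.ext
    funext p
    show Yfun n (mutv n (c • μ)) p.1 p.2 = c * Yfun n (mutv n μ) p.1 p.2
    unfold Yfun
    rw [show (fun cc => mutv n (c • μ) (p.2 - castQuad n cc))
        = (fun cc => c * mutv n μ (p.2 - castQuad n cc)) from
      funext fun cc => mutv_smul n c μ _]
    exact list_sum_map_mul _ _ _

lemma emb_inj (n : ℕ) [NeZero n] : Function.Injective (emb n) := by
  rintro ⟨x, i, j, w⟩ ⟨x', i', j', w'⟩ h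
  simp only [emb, Prod.ext_iff] at h
  obtain ⟨h1, h2, h3, h4⟩ := h
  have hi : i = i' := Fin.ext (natCast_zmod_inj n (fin_lt n i) (fin_lt n i') h2)
  have hj : j = j' := Fin.ext (natCast_zmod_inj n (fin_lt n j) (fin_lt n j') h3)
  simp [Prod.ext_iff, h1, hi, hj, h4]

lemma Y_at_z (n : ℕ) (l : NQuad n → ZMod 2) (v : NQuad n) :
    Yfun n l zR v = l (v - castQuad n ((0:ℤ), 0, 0, 0)) + l (v - castQuad n ((0:ℤ), 0, 1, 0))
      + l (v - castQuad n ((0:ℤ), 1, 0, 0)) + l (v - castQuad n ((0:ℤ), 1, 1, 0)) := by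
  have hS : Sm zR
      = [((0:ℤ), 0, 0, 0), ((0:ℤ), 0, 1, 0), ((0:ℤ), 1, 0, 0), ((0:ℤ), 1, 1, 0)] := by decide
  unfold Yfun
  rw [hS]
  simp [add_assoc]

lemma mutv_at_emb (n : ℕ) [NeZero n] (μ : Pidx n → ZMod 2) (p : Pidx n) :
    mutv n μ (emb n p) = μ p := by
  unfold mutv
  rw [Finset.sum_eq_single p]
  · rw [if_pos rfl]
  · intro b _ hb
    exact if_neg fun he => hb (emb_inj n he).symm
  · intro h
    exact absurd (Finset.mem_univ _) h

lemma Gmap_inj (n : ℕ) [NeZero n] : Function.Injective (Gmap n) := by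
  refine (injective_iff_map_eq_zero _).mpr fun μ hμ => ?_
  have h0 : ∀ v : NQuad n, Yfun n (mutv n μ) zR v = 0 := by
    intro v
    have := congrArg (fun f : eigOne (Lam n) => (f : (RSet × NQuad n) → ZMod 2) (zR, v)) hμ
    simpa [Gmap] using this
  have hone : (1 : ℕ) ≤ n := Nat.one_le_iff_ne_zero.mpr (NeZero.ne n)
  have hneg1 : ((n - 1 : ℕ) : ZMod n) = -1 := by
    rw [Nat.cast_sub hone, Nat.cast_one, ZMod.natCast_self, zero_sub]
  have hnm1lt : n - 1 < n := Nat.sub_lt (by omega) one_pos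
  funext p
  obtain ⟨x, i, j, w⟩ := p
  show μ (x, i, j, w) = 0
  by_contra hp
  classical
  set T : Finset (Fin (n - 1) × Fin (n - 1)) :=
    Finset.univ.filter (fun q => μ (x, q.1, q.2, w) ≠ 0) with hT
  have hTne : T.Nonempty := ⟨(i, j), by simp [hT, hp]⟩
  obtain ⟨q₀, hq₀T, hmin⟩ := Finset.exists_min_image T (fun q => q.1.val * n + q.2.val) hTne
  obtain ⟨i₀, j₀⟩ := q₀
  have hμ₀ : μ (x, i₀, j₀, w) ≠ 0 := by
    have := hq₀T
    rw [hT, Finset.mem_filter] at this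
    exact this.2
  have hout : ∀ a : Fin (n - 1), ((a.val : ZMod n) = -1) → False := by
    intro a ha
    rw [← hneg1] at ha
    have := natCast_zmod_inj n (fin_lt n a) hnm1lt ha
    have := a.isLt
    omega
  set v0 : NQuad n := emb n (x, i₀, j₀, w) with hv0
  have hrel := h0 v0
  rw [Y_at_z] at hrel
  have e0 : v0 - castQuad n ((0:ℤ), 0, 0, 0) = emb n (x, i₀, j₀, w) := by
    simp [hv0, castQuad, Prod.ext_iff, emb]
  have e3 : v0 - castQuad n ((0:ℤ), 0, 1, 0)
      = (x, (i₀.val : ZMod n), (j₀.val : ZMod n) - 1, w) := by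
    simp [hv0, castQuad, Prod.ext_iff, emb, sub_eq_add_neg]
  have e2 : v0 - castQuad n ((0:ℤ), 1, 0, 0)
      = (x, (i₀.val : ZMod n) - 1, (j₀.val : ZMod n), w) := by
    simp [hv0, castQuad, Prod.ext_iff, emb, sub_eq_add_neg]
  have e23 : v0 - castQuad n ((0:ℤ), 1, 1, 0)
      = (x, (i₀.val : ZMod n) - 1, (j₀.val : ZMod n) - 1, w) := by
    simp [hv0, castQuad, Prod.ext_iff, emb, sub_eq_add_neg]
  rw [e0, e3, e2, e23, mutv_at_emb] at hrel
  have hvanish : ∀ (A B : ZMod n),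
      (∀ p' : Pidx n, (x, A, B, w) = emb n p' → μ p' = 0) →
      mutv n μ (x, A, B, w) = 0 := by
    intro A B hcond
    unfold mutv
    apply Finset.sum_eq_zero
    intro p' _
    by_cases h : (x, A, B, w) = emb n p'
    · rw [if_pos h, hcond p' h]
    · rw [if_neg h]
  have t2 : mutv n μ (x, (i₀.val : ZMod n) - 1, (j₀.val : ZMod n), w) = 0 := by
    apply hvanish
    rintro ⟨x', i', j', w'⟩ h
    simp only [emb, Prod.ext_iff] at h
    obtain ⟨hx, hi, hjj, hw⟩ := h
    have hj' : j'.val = j₀.val :=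
      (natCast_zmod_inj n (fin_lt n j₀) (fin_lt n j') hjj).symm
    rcases Nat.eq_zero_or_pos i₀.val with h0' | hpos
    · exfalso
      apply hout i'
      rw [← hi, h0', Nat.cast_zero, zero_sub]
    · obtain ⟨k, hk2⟩ : ∃ k, i₀.val = k + 1 := ⟨i₀.val - 1, by omega⟩
      have hcast : ((i₀.val : ZMod n)) - 1 = ((k : ℕ) : ZMod n) := by
        rw [hk2]; push_cast; ring
      have hi' : i'.val = k := by
        apply natCast_zmod_inj n (fin_lt n i') (by have := i₀.isLt; omega : k < n)
        rw [← hcast, ← hi]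
      by_contra hne
      have mem : (i', j') ∈ T := by
        rw [hT, Finset.mem_filter]
        refine ⟨Finset.mem_univ _, ?_⟩
        rw [← hx, ← hw] at hne
        exact hne
      have hle := hmin (i', j') mem
      simp only at hle
      rw [hi', hj', hk2] at hle
      have hexp : (k + 1) * n = k * n + n := by ring
      rw [hexp] at hle
      have := fin_lt n j₀
      omega
  have t3 : mutv n μ (x, (i₀.val : ZMod n), (j₀.val : ZMod n) - 1, w) = 0 := by
    apply hvanish
    rintro ⟨x', i', j', w'⟩ h
    simp only [emb, Prod.ext_iff] at h
    obtain ⟨hx, hi, hjj, hw⟩ := h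
    have hi' : i'.val = i₀.val :=
      (natCast_zmod_inj n (fin_lt n i₀) (fin_lt n i') hi).symm
    rcases Nat.eq_zero_or_pos j₀.val with h0' | hpos
    · exfalso
      apply hout j'
      rw [← hjj, h0', Nat.cast_zero, zero_sub]
    · obtain ⟨k, hk2⟩ : ∃ k, j₀.val = k + 1 := ⟨j₀.val - 1, by omega⟩
      have hcast : ((j₀.val : ZMod n)) - 1 = ((k : ℕ) : ZMod n) := by
        rw [hk2]; push_cast; ring
      have hj' : j'.val = k := by
        apply natCast_zmod_inj n (fin_lt n j') (by have := j₀.isLt; omega : k < n)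
        rw [← hcast, ← hjj]
      by_contra hne
      have mem : (i', j') ∈ T := by
        rw [hT, Finset.mem_filter]
        refine ⟨Finset.mem_univ _, ?_⟩
        rw [← hx, ← hw] at hne
        exact hne
      have hle := hmin (i', j') mem
      simp only at hle
      rw [hi', hj', hk2] at hle
      omega
  have t23 : mutv n μ (x, (i₀.val : ZMod n) - 1, (j₀.val : ZMod n) - 1, w) = 0 := by
    apply hvanish
    rintro ⟨x', i', j', w'⟩ h
    simp only [emb, Prod.ext_iff] at h
    obtain ⟨hx, hi, hjj, hw⟩ := h
    rcases Nat.eq_zero_or_pos i₀.val with h0' | hpos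
    · exfalso
      apply hout i'
      rw [← hi, h0', Nat.cast_zero, zero_sub]
    rcases Nat.eq_zero_or_pos j₀.val with h0j | hposj
    · exfalso
      apply hout j'
      rw [← hjj, h0j, Nat.cast_zero, zero_sub]
    obtain ⟨k, hk2⟩ : ∃ k, i₀.val = k + 1 := ⟨i₀.val - 1, by omega⟩
    obtain ⟨m, hm2⟩ : ∃ m, j₀.val = m + 1 := ⟨j₀.val - 1, by omega⟩
    have hcast : ((i₀.val : ZMod n)) - 1 = ((k : ℕ) : ZMod n) := by
      rw [hk2]; push_cast; ring
    have hcastj : ((j₀.val : ZMod n)) - 1 = ((m : ℕ) : ZMod n) := by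
      rw [hm2]; push_cast; ring
    have hi' : i'.val = k := by
      apply natCast_zmod_inj n (fin_lt n i') (by have := i₀.isLt; omega : k < n)
      rw [← hcast, ← hi]
    have hj' : j'.val = m := by
      apply natCast_zmod_inj n (fin_lt n j') (by have := j₀.isLt; omega : m < n)
      rw [← hcastj, ← hjj]
    by_contra hne
    have mem : (i', j') ∈ T := by
      rw [hT, Finset.mem_filter]
      refine ⟨Finset.mem_univ _, ?_⟩
      rw [← hx, ← hw] at hne
      exact hne
    have hle := hmin (i', j') mem
    simp only at hle
    rw [hi', hj', hk2, hm2] at hle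
    have hexp : (k + 1) * n = k * n + n := by ring
    rw [hexp] at hle
    omega
  rw [t2, t3, t23] at hrel
  simp at hrel
  exact hμ₀ hrel


/-- For `n ≥ 3`, the 1-eigenspace of `Λ_n` over `F₂` satisfies
`72 · dim E₁(Λ_n) ≥ 16n⁴ = |V(Λ_n)|`. -/
theorem statement10 (n : ℕ) (hn : 3 ≤ n) :
    haveI : NeZero n := ⟨by omega⟩
    16 * n ^ 4 = Nat.card (RSet × NQuad n) ∧
    16 * n ^ 4 ≤ 72 * Module.finrank (ZMod 2) (eigOne (Lam n)) := by
  haveI : NeZero n := ⟨by omega⟩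
  constructor
  · simp only [Nat.card_eq_fintype_card, Fintype.card_prod, ZMod.card, Fintype.card_fin]
    ring
  · have hinj := Gmap_inj n
    have hle : Module.finrank (ZMod 2) (Pidx n → ZMod 2)
        ≤ Module.finrank (ZMod 2) (eigOne (Lam n)) :=
      LinearMap.finrank_le_finrank_of_injective hinj
    have hpi : Module.finrank (ZMod 2) (Pidx n → ZMod 2) = Fintype.card (Pidx n) :=
      Module.finrank_pi (ZMod 2)
    have hcard : Fintype.card (Pidx n) = n * ((n - 1) * ((n - 1) * n)) := by
      simp [Fintype.card_prod, ZMod.card, Fintype.card_fin]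
    have harith : 16 * n ^ 4 ≤ 72 * (n * ((n - 1) * ((n - 1) * n))) := by
      obtain ⟨m, rfl⟩ : ∃ m, n = m + 3 := ⟨n - 3, by omega⟩
      have h1 : m + 3 - 1 = m + 2 := by omega
      rw [h1]
      nlinarith [sq_nonneg m, Nat.zero_le m]
    calc 16 * n ^ 4 ≤ 72 * (n * ((n - 1) * ((n - 1) * n))) := harith
      _ = 72 * Fintype.card (Pidx n) := by rw [hcard]
      _ = 72 * Module.finrank (ZMod 2) (Pidx n → ZMod 2) := by rw [hpi]
      _ ≤ 72 * Module.finrank (ZMod 2) (eigOne (Lam n)) := Nat.mul_le_mul_left _ hle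
end

section
/- Let Λ be a finite simple graph in which any two distinct vertices have distinct neighbourhoods, and let Γ = Λ[K̄_2]. For x ∈ E_1(Λ) let g_x be the permutation of V(Γ) given by g_x(v,i) = (v, i + x(v)). Then {g_x : x ∈ E_1(Λ)} is a subgroup of Aut(Γ), and it is a normal subgroup of Aut(Γ). -/
/-- The lexicographic product `Λ[K̄₂]`: vertex set `V(Λ) × F₂`, with `(u,i)` adjacent to
`(v,j)` iff `u` is adjacent to `v` in `Λ`. -/
def lexK2 {V : Type*} (Λ : SimpleGraph V) : SimpleGraph (V × ZMod 2) where
  Adj p q := Λ.Adj p.1 q.1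
  symm := ⟨fun _ _ h => Λ.adj_symm h⟩
  loopless := ⟨fun p h => Λ.irrefl h⟩

/-- A permutation `g` of the vertex set is an automorphism of the graph `Γ`. -/
def IsGraphAut {V : Type*} (Γ : SimpleGraph V) (g : Equiv.Perm V) : Prop :=
  ∀ u v : V, Γ.Adj (g u) (g v) ↔ Γ.Adj u v

/-- For `x : V → F₂`, the permutation `g_x` of `V × F₂` given by
`g_x(v,i) = (v, i + x(v))`. -/
def gx {V : Type*} (x : V → ZMod 2) : Equiv.Perm (V × ZMod 2) where
  toFun p := (p.1, p.2 + x p.1)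
  invFun p := (p.1, p.2 + x p.1)
  left_inv := by
    intro p
    have h : ∀ a : ZMod 2, a + a = 0 := by decide
    simp [add_assoc, h]
  right_inv := by
    intro p
    have h : ∀ a : ZMod 2, a + a = 0 := by decide
    simp [add_assoc, h]

open scoped Classical

namespace Statement16Aux

variable {V : Type*} [Fintype V] {Λ : SimpleGraph V}

lemma mem_eigOne_iff {x : V → ZMod 2} :
    x ∈ eigOne Λ ↔ ∀ v, (Λ.adjMatrix (ZMod 2)).mulVec x v = x v := by
  simp [eigOne, LinearMap.mem_ker, LinearMap.sub_apply, Matrix.toLin'_apply, sub_eq_zero,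
    funext_iff]

lemma gx_mul (x y : V → ZMod 2) : gx x * gx y = gx (x + y) := by
  ext p : 1
  simp only [Equiv.Perm.mul_apply, gx, Equiv.coe_fn_mk, Pi.add_apply, Prod.mk.injEq]
  exact ⟨trivial, by ring⟩

lemma gx_one : gx (0 : V → ZMod 2) = 1 := by
  ext p : 1
  simp [gx]

lemma gx_inv (x : V → ZMod 2) : (gx x)⁻¹ = gx x :=
  Equiv.ext fun p => rfl

lemma aut_fst (g : Equiv.Perm (V × ZMod 2)) (hg : IsGraphAut (lexK2 Λ) g)
    (hnbr : ∀ u v : V, u ≠ v → Λ.neighborSet u ≠ Λ.neighborSet v)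
    (u : V) (i : ZMod 2) : (g (u, i)).1 = (g (u, 0)).1 := by
  have key : ∀ w : V, Λ.Adj (g (u, i)).1 w ↔ Λ.Adj (g (u, 0)).1 w := by
    intro w
    have h1 := hg (u, i) (g.symm (w, 0))
    have h2 := hg (u, 0) (g.symm (w, 0))
    rw [Equiv.apply_symm_apply] at h1 h2
    simp only [lexK2] at h1 h2 ⊢
    rw [h1, h2]
  by_contra hne
  exact hnbr _ _ hne (Set.ext fun w => by
    simpa [SimpleGraph.mem_neighborSet] using key w)

lemma aut_succ (g : Equiv.Perm (V × ZMod 2)) (hg : IsGraphAut (lexK2 Λ) g)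
    (hnbr : ∀ u v : V, u ≠ v → Λ.neighborSet u ≠ Λ.neighborSet v)
    (u : V) (i : ZMod 2) : g (u, i + 1) = ((g (u, i)).1, (g (u, i)).2 + 1) := by
  have hfst : (g (u, i + 1)).1 = (g (u, i)).1 := by
    rw [aut_fst g hg hnbr u (i + 1), aut_fst g hg hnbr u i]
  have hne : g (u, i + 1) ≠ g (u, i) := by
    intro hcontr
    have := g.injective hcontr
    exact (by decide : ∀ j : ZMod 2, j + 1 ≠ j) i (congrArg Prod.snd this)
  have hsnd : (g (u, i + 1)).2 ≠ (g (u, i)).2 := fun h => hne (Prod.ext hfst h)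
  have h2 : ∀ a b : ZMod 2, a ≠ b → a = b + 1 := by decide
  exact Prod.ext hfst (h2 _ _ hsnd)

lemma aut_inv (g : Equiv.Perm (V × ZMod 2)) (hg : IsGraphAut (lexK2 Λ) g) :
    IsGraphAut (lexK2 Λ) g⁻¹ := by
  intro u v
  have := hg (g⁻¹ u) (g⁻¹ v)
  simpa using this.symm

lemma conj_mem (hnbr : ∀ u v : V, u ≠ v → Λ.neighborSet u ≠ Λ.neighborSet v)
    (h : Equiv.Perm (V × ZMod 2)) (hh : IsGraphAut (lexK2 Λ) h)
    (x : V → ZMod 2) (hx : x ∈ eigOne Λ) :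
    ∃ y ∈ eigOne Λ, h * gx x * h⁻¹ = gx y := by
  have hhinv := aut_inv h hh
  set s : V → V := fun v => (h⁻¹ (v, 0)).1 with hs
  -- s is injective
  have hinj : Function.Injective s := by
    intro u v huv
    have hu : (h (s u, 0)).1 = u := by
      have : h (s u, (h⁻¹ (u, 0)).2) = (u, 0) := by
        show h ((h⁻¹ (u, 0)).1, (h⁻¹ (u, 0)).2) = (u, 0)
        rw [Prod.mk.eta]; exact h.apply_symm_apply _
      rw [← aut_fst h hh hnbr (s u) (h⁻¹ (u, 0)).2, this]
    have hv : (h (s v, 0)).1 = v := by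
      have : h (s v, (h⁻¹ (v, 0)).2) = (v, 0) := by
        show h ((h⁻¹ (v, 0)).1, (h⁻¹ (v, 0)).2) = (v, 0)
        rw [Prod.mk.eta]; exact h.apply_symm_apply _
      rw [← aut_fst h hh hnbr (s v) (h⁻¹ (v, 0)).2, this]
    rw [← hu, ← hv, huv]
  have hbij : Function.Bijective s := Finite.injective_iff_bijective.mp hinj
  -- s preserves adjacency
  have hadj : ∀ u v : V, Λ.Adj (s u) (s v) ↔ Λ.Adj u v := by
    intro u v
    have := hhinv (u, 0) (v, 0)
    simpa [lexK2, hs] using this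
  refine ⟨fun v => x (s v), ?_, ?_⟩
  · rw [mem_eigOne_iff]
    intro v
    rw [mem_eigOne_iff] at hx
    have key : ∀ u, (Λ.adjMatrix (ZMod 2)) v u * x (s u)
        = (Λ.adjMatrix (ZMod 2)) (s v) (s u) * x (s u) := by
      intro u
      congr 1
      simp [SimpleGraph.adjMatrix_apply, hadj]
    calc (Λ.adjMatrix (ZMod 2)).mulVec (fun u => x (s u)) v
        = ∑ u, (Λ.adjMatrix (ZMod 2)) v u * x (s u) := by
          simp [Matrix.mulVec, dotProduct]
      _ = ∑ u, (Λ.adjMatrix (ZMod 2)) (s v) (s u) * x (s u) :=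
          Finset.sum_congr rfl fun u _ => key u
      _ = ∑ w, (Λ.adjMatrix (ZMod 2)) (s v) w * x w :=
          Fintype.sum_bijective s hbij _ _ (fun u => rfl)
      _ = (Λ.adjMatrix (ZMod 2)).mulVec x (s v) := by
          simp [Matrix.mulVec, dotProduct]
      _ = x (s v) := hx (s v)
  · ext p : 1
    obtain ⟨v, i⟩ := p
    have hq : h⁻¹ (v, i) = (s v, (h⁻¹ (v, i)).2) := by
      refine Prod.ext ?_ rfl
      exact aut_fst h⁻¹ hhinv hnbr v i
    have lhs : (h * gx x * h⁻¹) (v, i)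
        = h (s v, (h⁻¹ (v, i)).2 + x (s v)) := by
      simp only [Equiv.Perm.mul_apply]
      rw [hq]
      rfl
    rw [lhs]
    show h (s v, (h⁻¹ (v, i)).2 + x (s v)) = (v, i + x (s v))
    have hback : h (s v, (h⁻¹ (v, i)).2) = (v, i) := by
      conv_lhs => rw [← hq]
      exact h.apply_symm_apply _
    rcases (by decide : ∀ a : ZMod 2, a = 0 ∨ a = 1) (x (s v)) with h0 | h1
    · rw [h0]; simpa using hback
    · rw [h1]
      rw [aut_succ h hh hnbr (s v) (h⁻¹ (v, i)).2, hback]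

end Statement16Aux

open Statement16Aux in
/-- If any two distinct vertices of `Λ` have distinct neighbourhoods, then
`{g_x : x ∈ E₁(Λ)}` is a subgroup of `Aut(Λ[K̄₂])`, normalised by every automorphism of
`Λ[K̄₂]`. -/
theorem statement16 {V : Type*} [Fintype V] (Λ : SimpleGraph V)
    (hnbr : ∀ u v : V, u ≠ v → Λ.neighborSet u ≠ Λ.neighborSet v) :
    ∃ H : Subgroup (Equiv.Perm (V × ZMod 2)),
      (H : Set (Equiv.Perm (V × ZMod 2))) = {g | ∃ x ∈ eigOne Λ, g = gx x} ∧
      (∀ g ∈ H, IsGraphAut (lexK2 Λ) g) ∧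
      (∀ h : Equiv.Perm (V × ZMod 2), IsGraphAut (lexK2 Λ) h →
        ∀ g ∈ H, h * g * h⁻¹ ∈ H) := by
  refine ⟨{ carrier := {g | ∃ x ∈ eigOne Λ, g = gx x}
            mul_mem' := ?_
            one_mem' := ⟨0, zero_mem _, gx_one.symm⟩
            inv_mem' := ?_ }, rfl, ?_, ?_⟩
  · rintro a b ⟨x, hx, rfl⟩ ⟨y, hy, rfl⟩
    exact ⟨x + y, add_mem hx hy, gx_mul x y⟩
  · rintro a ⟨x, hx, rfl⟩
    exact ⟨x, hx, gx_inv x⟩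
  · rintro g ⟨x, hx, rfl⟩ u v
    simp [lexK2, gx, IsGraphAut]
  · rintro h hh g ⟨x, hx, rfl⟩
    obtain ⟨y, hy, hconj⟩ := conj_mem hnbr h hh x hx
    exact ⟨y, hy, hconj⟩
end
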